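/- arXiv:2302.12809 — 2 statements merged into one kernel-verified Lean document; each statement's English description precedes it below -/
import Mathlib

section
/- (Fell's absorption principle for semigroups, second version; necessity.) Let P be a submonoid of a (discrete) group G and let V = {V_p}_{p∈P} be an isometric representation of P on a Hilbert space H. If there exists an injective unital *-homomorphism φ from 𝒯̄_λ(P) into B(ℋ̄ ⊗ H) with φ(L̄_p) = L̄_p ⊗ V_p for all p ∈ P, then V̇_a = V̇_b whenever a, b are neutral words over P with K(a) = K(b) ≠ ∅. -/
noncomputable section
set_option synthInstance.maxHeartbeats 1000000
set_option maxHeartbeats 1000000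
set_option linter.unusedVariables false

open scoped ENNReal

/-- `ℓ²(ι)` with complex coefficients. -/
abbrev l2 (ι : Type*) : Type _ := lp (fun _ : ι => ℂ) 2

/-- The canonical orthonormal basis vector `δ_i` of `ℓ²(ι)`. -/
noncomputable def ket {ι : Type*} (i : ι) : l2 ι :=
  haveI := Classical.decEq ι
  lp.single 2 i 1

variable {G : Type*} [Group G]

/-- A word `a = (p₁, p₂, …, p_{2k-1}, p_{2k})` of even length over `P`, recorded as the list of
its consecutive pairs `(p₁,p₂), (p₃,p₄), …, (p_{2k-1},p_{2k})`. -/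
abbrev Word (P : Submonoid G) := List (P × P)

/-- `ȧ = p₁⁻¹ p₂ ⋯ p_{2k-1}⁻¹ p_{2k} ∈ G`. -/
def wordElem (P : Submonoid G) (w : Word P) : G :=
  (w.map (fun pq => ((pq.1 : G))⁻¹ * (pq.2 : G))).prod

/-- A word is neutral if `ȧ = e`. -/
def IsNeutral (P : Submonoid G) (w : Word P) : Prop := wordElem P w = 1

/-- `V̇_a = V_{p₁}^* V_{p₂} ⋯ V_{p_{2k-1}}^* V_{p_{2k}}`. -/
def dotted {A : Type*} [Monoid A] [Star A] (P : Submonoid G) (V : P → A) (w : Word P) : A :=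
  (w.map (fun pq => star (V pq.1) * V pq.2)).prod

/-- The constructible right ideal `K(a) = {p ∈ P : L̇_a δ_p = δ_p}`, where `L` is the left
regular representation of `P` on `ℓ²(P)`. -/
def KIdeal (P : Submonoid G) (L : P → (l2 P →L[ℂ] l2 P)) (w : Word P) : Set P :=
  {p : P | dotted P L w (ket p) = ket p}

/-- The index set `X = ⨿_{n ≥ 1} Pⁿ` underlying `ℋ̄ = ⊕_{n≥1} ℓ²(P)^{⊗n} ≅ ℓ²(X)`. -/
abbrev PTuples (P : Submonoid G) := Σ n : ℕ, Fin (n + 1) → P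

/-- Coordinatewise left multiplication of a tuple by `p`; `L̄_p δ_x = δ_{p • x}`. -/
def pMul (P : Submonoid G) (p : P) (x : PTuples P) : PTuples P := ⟨x.1, fun i => p * x.2 i⟩

/-- The element `δ_i ⊗ ξ` of the `ℓ²`-direct sum `⊕_{i ∈ ι} H`. -/
noncomputable def ketV {ι : Type*} {H : Type*} [NormedAddCommGroup H] [InnerProductSpace ℂ H]
    (i : ι) (ξ : H) : lp (fun _ : ι => H) 2 :=
  haveI := Classical.decEq ι
  lp.single 2 i ξ

/-! ### Auxiliary material -/

set_option linter.unusedSectionVars false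

open scoped InnerProductSpace Classical

section hilbert

variable {ι : Type*} {H : Type*} [NormedAddCommGroup H] [InnerProductSpace ℂ H]
  [CompleteSpace H]

local notation "𝓗" => lp (fun _ : ι => H) 2

lemma ketV_coord (i : ι) (ξ : H) (j : ι) :
    (ketV i ξ : ∀ _ : ι, H) j = if j = i then ξ else 0 := by
  rw [ketV, lp.single_apply]
  split <;> simp_all

lemma inner_ketV_left (i : ι) (ξ : H) (f : 𝓗) :
    ⟪ketV i ξ, f⟫_ℂ = ⟪ξ, f i⟫_ℂ := by
  rw [ketV]
  exact lp.inner_single_left (𝕜 := ℂ) i ξ f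

lemma inner_ketV_ketV (i j : ι) (ξ η : H) :
    ⟪ketV i ξ, ketV j η⟫_ℂ = if i = j then ⟪ξ, η⟫_ℂ else 0 := by
  rw [inner_ketV_left, ketV_coord]
  rw [eq_comm (a := i) (b := j)]
  split <;> simp

lemma star_ketV_hit (A : 𝓗 →L[ℂ] 𝓗) (f : ι → ι) (hf : Function.Injective f)
    (U : H →L[ℂ] H) (hA : ∀ i ξ, A (ketV i ξ) = ketV (f i) (U ξ)) (i : ι) (ξ : H) :
    (star A) (ketV (f i) ξ) = ketV i (ContinuousLinearMap.adjoint U ξ) := by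
  apply lp.ext
  funext k
  apply ext_inner_left ℂ
  intro v
  rw [← inner_ketV_left, ← inner_ketV_left, ContinuousLinearMap.star_eq_adjoint,
    ContinuousLinearMap.adjoint_inner_right, hA, inner_ketV_ketV, inner_ketV_ketV,
    ContinuousLinearMap.adjoint_inner_right]
  by_cases h : k = i
  · simp [h]
  · rw [if_neg (fun hc => h (hf hc)), if_neg h]

lemma star_ketV_miss (A : 𝓗 →L[ℂ] 𝓗) (f : ι → ι)
    (U : H →L[ℂ] H) (hA : ∀ i ξ, A (ketV i ξ) = ketV (f i) (U ξ)) (j : ι)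
    (hj : ∀ i, f i ≠ j) (ξ : H) :
    (star A) (ketV j ξ) = 0 := by
  apply lp.ext
  funext k
  apply ext_inner_left ℂ
  intro v
  rw [← inner_ketV_left, ContinuousLinearMap.star_eq_adjoint,
    ContinuousLinearMap.adjoint_inner_right, hA, inner_ketV_ketV, if_neg (hj k)]
  simp

lemma clm_ext_of_ketV {A B : 𝓗 →L[ℂ] 𝓗} (h : ∀ i ξ, A (ketV i ξ) = B (ketV i ξ)) :
    A = B := by
  refine ContinuousLinearMap.ext fun g => ?_
  have hs := lp.hasSum_single (E := fun _ : ι => H) (by norm_num) g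
  have hA := A.hasSum hs
  have hB := B.hasSum hs
  have he : (fun i => A (lp.single 2 i (g i))) = fun i => B (lp.single 2 i (g i)) := by
    funext i
    have := h i (g i)
    rw [ketV] at this
    convert this using 3 <;> exact Subsingleton.elim _ _
  rw [he] at hA
  exact hA.unique hB

end hilbert

section ketcomplex

variable {ι : Type*}

lemma ketV_eq_smul (i : ι) (ξ : ℂ) : (ketV i ξ : l2 ι) = ξ • ket i := by
  rw [ket, ketV, ← lp.single_smul]
  norm_num

lemma ket_eq_ketV (i : ι) : (ket i : l2 ι) = ketV i 1 := rfl

lemma star_ket_hit (A : l2 ι →L[ℂ] l2 ι) (f : ι → ι) (hf : Function.Injective f)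
    (hA : ∀ i, A (ket i) = ket (f i)) (i : ι) :
    (star A) (ket (f i)) = ket i := by
  have hA' : ∀ j ξ, A (ketV j ξ) = ketV (f j) ((1 : ℂ →L[ℂ] ℂ) ξ) := by
    intro j ξ
    rw [ketV_eq_smul, map_smul, hA, ContinuousLinearMap.one_apply, ketV_eq_smul]
  have := star_ketV_hit A f hf 1 hA' i 1
  rw [← ket_eq_ketV] at this
  rw [this, ← ContinuousLinearMap.star_eq_adjoint, star_one, ContinuousLinearMap.one_apply,
    ← ket_eq_ketV]

lemma star_ket_miss (A : l2 ι →L[ℂ] l2 ι) (f : ι → ι)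
    (hA : ∀ i, A (ket i) = ket (f i)) (j : ι) (hj : ∀ i, f i ≠ j) :
    (star A) (ket j) = 0 := by
  have hA' : ∀ j ξ, A (ketV j ξ) = ketV (f j) ((1 : ℂ →L[ℂ] ℂ) ξ) := by
    intro j ξ
    rw [ketV_eq_smul, map_smul, hA, ContinuousLinearMap.one_apply, ketV_eq_smul]
  have := star_ketV_miss A f 1 hA' j hj 1
  rwa [← ket_eq_ketV] at this

lemma ket_ne_zero (i : ι) : (ket i : l2 ι) ≠ 0 := by
  intro h
  have := congrArg (fun g : l2 ι => (g : ∀ _ : ι, ℂ) i) h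
  rw [ket_eq_ketV] at this
  simp only [ketV_coord, if_pos rfl] at this
  simpa using this

end ketcomplex

section words

variable (P : Submonoid G)

@[simp] lemma dotted_nil {A : Type*} [Monoid A] [Star A] (V : P → A) :
    dotted P V [] = 1 := rfl

lemma dotted_cons {A : Type*} [Monoid A] [Star A] (V : P → A) (pq : P × P) (w : Word P) :
    dotted P V (pq :: w) = (star (V pq.1) * V pq.2) * dotted P V w := by
  simp [dotted]

lemma map_dotted {A B F : Type*} [Monoid A] [Monoid B] [Star A] [Star B] [FunLike F A B]
    [MonoidHomClass F A B] [StarHomClass F A B] (f : F) (V : P → A) (w : Word P) :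
    f (dotted P V w) = dotted P (fun p => f (V p)) w := by
  induction w with
  | nil => simp [dotted]
  | cons pq w ih => rw [dotted_cons, dotted_cons, map_mul, map_mul, map_star, ih]

/-- The partial evaluation of the dotted word on a basis vector index. -/
def res : Word P → P → Option P
  | [], p => some p
  | pq :: w, p => (res w p).bind (fun r =>
      if h : ((pq.1 : G))⁻¹ * (pq.2 : G) * (r : G) ∈ P then some ⟨_, h⟩ else none)

lemma res_coe : ∀ (w : Word P) (p q : P), res P w p = some q → (q : G) = wordElem P w * p := by
  intro w
  induction w with
  | nil => intro p q h; simp [res] at h; simp [← h, wordElem]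
  | cons pq w ih =>
    intro p q h
    simp only [res, Option.bind_eq_some_iff] at h
    obtain ⟨r, hr, hq⟩ := h
    split at hq
    · next hmem =>
      have := ih p r hr
      simp only [Option.some_inj] at hq
      rw [← hq]
      simp only [wordElem, List.map_cons, List.prod_cons]
      rw [this]
      simp [wordElem, mul_assoc]
    · exact absurd hq (by simp)

lemma res_neutral (w : Word P) (hw : IsNeutral P w) (p q : P) (h : res P w p = some q) :
    q = p := by
  have := res_coe P w p q h
  rw [hw] at this
  exact Subtype.ext (by simpa using this)

/-- The partial evaluation of the dotted word on tuples. -/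
def resX : Word P → PTuples P → Option (PTuples P)
  | [], x => some x
  | pq :: w, x => (resX w x).bind fun y =>
      if h : ∀ i, ((pq.1 : G))⁻¹ * (pq.2 : G) * ((y.2 i : G)) ∈ P then
        some ⟨y.1, fun i => ⟨_, h i⟩⟩ else none

lemma resX_fst : ∀ (w : Word P) (x y : PTuples P), resX P w x = some y → y.1 = x.1 := by
  intro w
  induction w with
  | nil => intro x y h; simp [resX] at h; rw [← h]
  | cons pq w ih =>
    intro x y h
    simp only [resX, Option.bind_eq_some_iff] at h
    obtain ⟨z, hz, hy⟩ := h
    split at hy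
    · simp only [Option.some_inj] at hy
      rw [← hy]
      exact ih x z hz
    · exact absurd hy (by simp)

lemma resX_coord : ∀ (w : Word P) (x y : PTuples P) (h : resX P w x = some y),
    ∀ i : Fin (x.1 + 1), res P w (x.2 i) = some (y.2 (Fin.cast (by rw [resX_fst P w x y h]) i)) := by
  intro w
  induction w with
  | nil =>
    intro x y h i
    simp only [resX, Option.some_inj] at h
    subst h
    rfl
  | cons pq w ih =>
    intro x y h i
    simp only [resX, Option.bind_eq_some_iff] at h
    obtain ⟨z, hz, hy⟩ := h
    split at hy
    · next hmem =>
      simp only [Option.some_inj] at hy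
      have hc := ih x z hz i
      simp only [res, hc, Option.bind_eq_some_iff]
      subst hy
      refine ⟨_, rfl, ?_⟩
      rw [dif_pos]
    · exact absurd hy (by simp)

lemma resX_isSome_iff : ∀ (w : Word P) (x : PTuples P),
    (resX P w x).isSome ↔ ∀ i, (res P w (x.2 i)).isSome := by
  intro w
  induction w with
  | nil => intro x; simp [resX, res]
  | cons pq w ih =>
    intro x
    constructor
    · intro h
      rw [Option.isSome_iff_exists] at h
      obtain ⟨y, hy⟩ := h
      simp only [resX, Option.bind_eq_some_iff] at hy
      obtain ⟨z, hz, hy2⟩ := hy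
      have hmem : ∀ j, ((pq.1 : G))⁻¹ * (pq.2 : G) * ((z.2 j : G)) ∈ P := by
        by_contra hc
        rw [dif_neg hc] at hy2
        exact absurd hy2 (by simp)
      intro i
      have hc := resX_coord P w x z hz i
      simp only [res, hc, Option.bind_some]
      rw [dif_pos (hmem _)]
      simp
    · intro h
      have hw : (resX P w x).isSome := by
        rw [ih]
        intro i
        have := h i
        simp only [res] at this
        rcases ho : res P w (x.2 i) with _ | v
        · rw [ho] at this; simp at this
        · simp [ho]
      rw [Option.isSome_iff_exists] at hw
      obtain ⟨z, hz⟩ := hw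
      have hmem : ∀ j, ((pq.1 : G))⁻¹ * (pq.2 : G) * ((z.2 j : G)) ∈ P := by
        intro j
        have hfst := resX_fst P w x z hz
        let i : Fin (x.1 + 1) := Fin.cast (by rw [hfst]) j
        have hc := resX_coord P w x z hz i
        have hi := h i
        simp only [res, hc, Option.bind_some] at hi
        by_contra hcc
        have : (Fin.cast (by rw [hfst] : x.1 + 1 = z.1 + 1) i) = j := by
          simp [i, Fin.ext_iff]
        rw [this, dif_neg hcc] at hi
        simp at hi
      simp only [resX, hz, Option.bind_some]
      rw [dif_pos hmem]
      simp

lemma mulP_injective (p : P) : Function.Injective (fun q : P => p * q) := by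
  intro a b h
  have := congrArg Subtype.val h
  push_cast at this
  exact Subtype.ext (mul_left_cancel this)

lemma pMul_injective (p : P) : Function.Injective (pMul P p) := by
  intro x y h
  obtain ⟨n, f⟩ := x
  obtain ⟨m, g⟩ := y
  simp only [pMul] at h
  obtain ⟨h1, h2⟩ := Sigma.mk.inj_iff.mp h
  subst h1
  have h2' : (fun i => p * f i) = fun i => p * g i := eq_of_heq h2
  have : f = g := funext fun i => mulP_injective P p (congrFun h2' i)
  rw [this]

lemma pMul_hit (pq : P × P) (y : PTuples P)
    (h : ∀ i, ((pq.1 : G))⁻¹ * (pq.2 : G) * ((y.2 i : G)) ∈ P) :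
    pMul P pq.1 ⟨y.1, fun i => ⟨_, h i⟩⟩ = pMul P pq.2 y := by
  simp only [pMul]
  congr 1
  funext i
  apply Subtype.ext
  push_cast
  group

lemma pMul_miss (pq : P × P) (y : PTuples P)
    (h : ¬ ∀ i, ((pq.1 : G))⁻¹ * (pq.2 : G) * ((y.2 i : G)) ∈ P) :
    ∀ z, pMul P pq.1 z ≠ pMul P pq.2 y := by
  intro z e
  apply h
  obtain ⟨n, g⟩ := y
  obtain ⟨m, f⟩ := z
  simp only [pMul] at e
  obtain ⟨h1, h2⟩ := Sigma.mk.inj_iff.mp e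
  subst h1
  intro i
  have h2' := congrFun (eq_of_heq h2) i
  have hco : ((pq.1 : G)) * (f i : G) = (pq.2 : G) * (g i : G) := by
    have := congrArg Subtype.val h2'
    push_cast at this
    exact this
  have hval : ((f i : P) : G) = ((pq.1 : G))⁻¹ * (pq.2 : G) * (g i : G) := by
    rw [mul_assoc, ← hco]
    group
  rw [← hval]
  exact (f i).2

lemma mulP_hit (pq : P × P) (r : P) (h : ((pq.1 : G))⁻¹ * (pq.2 : G) * (r : G) ∈ P) :
    pq.1 * (⟨_, h⟩ : P) = pq.2 * r := by
  apply Subtype.ext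
  push_cast
  group

lemma mulP_miss (pq : P × P) (r : P) (h : ¬ ((pq.1 : G))⁻¹ * (pq.2 : G) * (r : G) ∈ P) :
    ∀ s : P, pq.1 * s ≠ pq.2 * r := by
  intro s e
  apply h
  have hco : ((pq.1 : G)) * (s : G) = (pq.2 : G) * (r : G) := by
    have := congrArg Subtype.val e
    push_cast at this
    exact this
  have hval : ((s : P) : G) = ((pq.1 : G))⁻¹ * (pq.2 : G) * (r : G) := by
    rw [mul_assoc, ← hco]; group
  rw [← hval]
  exact s.2

lemma dotted_L_ket (L : P → (l2 P →L[ℂ] l2 P)) (hL : ∀ p q : P, L p (ket q) = ket (p * q)) :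
    ∀ (w : Word P) (p : P), dotted P L w (ket p) = (res P w p).elim 0 ket := by
  intro w
  induction w with
  | nil => intro p; simp [res]
  | cons pq w ih =>
    intro p
    rw [dotted_cons, ContinuousLinearMap.mul_apply, ContinuousLinearMap.mul_apply, ih]
    rcases hr : res P w p with _ | r
    · simp [res, hr]
    · simp only [Option.elim]
      rw [hL]
      by_cases h : ((pq.1 : G))⁻¹ * (pq.2 : G) * (r : G) ∈ P
      · rw [← mulP_hit P pq r h,
          star_ket_hit (L pq.1) (fun q => pq.1 * q) (mulP_injective P pq.1) (hL pq.1) _]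
        simp [res, hr, h]
      · rw [star_ket_miss (L pq.1) (fun q => pq.1 * q) (hL pq.1) _ (mulP_miss P pq r h)]
        simp [res, hr, h]

lemma dotted_Lbar_ket (Lbar : P → (l2 (PTuples P) →L[ℂ] l2 (PTuples P)))
    (hLbar : ∀ (p : P) (x : PTuples P), Lbar p (ket x) = ket (pMul P p x)) :
    ∀ (w : Word P) (x : PTuples P), dotted P Lbar w (ket x) = (resX P w x).elim 0 ket := by
  intro w
  induction w with
  | nil => intro x; simp [resX]
  | cons pq w ih =>
    intro x
    rw [dotted_cons, ContinuousLinearMap.mul_apply, ContinuousLinearMap.mul_apply, ih]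
    rcases hr : resX P w x with _ | y
    · simp [resX, hr]
    · simp only [Option.elim]
      rw [hLbar]
      by_cases h : ∀ i, ((pq.1 : G))⁻¹ * (pq.2 : G) * ((y.2 i : G)) ∈ P
      · rw [← pMul_hit P pq y h,
          star_ket_hit (Lbar pq.1) (pMul P pq.1) (pMul_injective P pq.1) (hLbar pq.1) _]
        simp [resX, hr, h]
      · rw [star_ket_miss (Lbar pq.1) (pMul P pq.1) (hLbar pq.1) _ (pMul_miss P pq y h)]
        simp [resX, hr, h]

lemma dotted_T_ketV {H : Type*} [NormedAddCommGroup H] [InnerProductSpace ℂ H] [CompleteSpace H]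
    (V : P → (H →L[ℂ] H))
    (T : P → (lp (fun _ : PTuples P => H) 2 →L[ℂ] lp (fun _ : PTuples P => H) 2))
    (hT : ∀ (p : P) (x : PTuples P) (ξ : H), T p (ketV x ξ) = ketV (pMul P p x) (V p ξ)) :
    ∀ (w : Word P) (x : PTuples P) (ξ : H),
      dotted P T w (ketV x ξ) = (resX P w x).elim 0 (fun y => ketV y (dotted P V w ξ)) := by
  intro w
  induction w with
  | nil => intro x ξ; simp [resX]
  | cons pq w ih =>
    intro x ξ
    rw [dotted_cons, ContinuousLinearMap.mul_apply, ContinuousLinearMap.mul_apply, ih]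
    rcases hr : resX P w x with _ | y
    · simp [resX, hr]
    · simp only [Option.elim]
      rw [hT]
      by_cases h : ∀ i, ((pq.1 : G))⁻¹ * (pq.2 : G) * ((y.2 i : G)) ∈ P
      · rw [← pMul_hit P pq y h,
          star_ketV_hit (T pq.1) (pMul P pq.1) (pMul_injective P pq.1) (V pq.1) (hT pq.1) _,
          ← ContinuousLinearMap.star_eq_adjoint]
        simp [resX, hr, h, dotted_cons, ContinuousLinearMap.mul_apply]
      · rw [star_ketV_miss (T pq.1) (pMul P pq.1) (V pq.1) (hT pq.1) _ (pMul_miss P pq y h)]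
        simp [resX, hr, h]

lemma kideal_iff (L : P → (l2 P →L[ℂ] l2 P)) (hL : ∀ p q : P, L p (ket q) = ket (p * q))
    (w : Word P) (hw : IsNeutral P w) (p : P) :
    p ∈ KIdeal P L w ↔ (res P w p).isSome := by
  rw [KIdeal, Set.mem_setOf_eq, dotted_L_ket P L hL]
  rcases h : res P w p with _ | q
  · simp only [Option.elim, Option.isSome_none]
    constructor
    · intro hc
      exact absurd hc.symm (ket_ne_zero p)
    · intro hc
      simp at hc
  · have := res_neutral P w hw p q h
    subst this
    simp

lemma resX_neutral (w : Word P) (hw : IsNeutral P w) (x : PTuples P) :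
    resX P w x = if (∀ i, (res P w (x.2 i)).isSome) then some x else none := by
  by_cases h : ∀ i, (res P w (x.2 i)).isSome
  · rw [if_pos h]
    have hs : (resX P w x).isSome := (resX_isSome_iff P w x).mpr h
    obtain ⟨y, hy⟩ := Option.isSome_iff_exists.mp hs
    rw [hy]
    congr 1
    have hfst := resX_fst P w x y hy
    obtain ⟨n, f⟩ := x
    obtain ⟨m, g⟩ := y
    simp only at hfst
    subst hfst
    have : g = f := by
      funext i
      have hc := resX_coord P w ⟨m, f⟩ ⟨m, g⟩ hy i
      have hcast : (Fin.cast (by rw [resX_fst P w ⟨m, f⟩ ⟨m, g⟩ hy] :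
          (⟨m, f⟩ : PTuples P).1 + 1 = (⟨m, g⟩ : PTuples P).1 + 1) i) = i := by
        simp [Fin.ext_iff]
      rw [hcast] at hc
      exact res_neutral P w hw (f i) (g i) hc
    rw [this]
  · rw [if_neg h, ← Option.not_isSome_iff_eq_none]
    rw [resX_isSome_iff]
    exact h

end words

/-- **Fell's absorption principle for semigroups (second version); necessity.** -/
theorem fell_absorption_second_necessity (P : Submonoid G)
    (L : P → (l2 P →L[ℂ] l2 P))
    (hL : ∀ p q : P, L p (ket q) = ket (p * q))
    (Lbar : P → (l2 (PTuples P) →L[ℂ] l2 (PTuples P)))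
    (hLbar : ∀ (p : P) (x : PTuples P), Lbar p (ket x) = ket (pMul P p x))
    {H : Type*} [NormedAddCommGroup H] [InnerProductSpace ℂ H] [CompleteSpace H]
    (V : P → (H →L[ℂ] H))
    (hV1 : V 1 = 1)
    (hVmul : ∀ p q : P, V (p * q) = V p * V q)
    (hViso : ∀ p : P, star (V p) * V p = 1)
    (T : P → (lp (fun _ : PTuples P => H) 2 →L[ℂ] lp (fun _ : PTuples P => H) 2))
    (hT : ∀ (p : P) (x : PTuples P) (ξ : H), T p (ketV x ξ) = ketV (pMul P p x) (V p ξ))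
    (φ : (StarAlgebra.adjoin ℂ (Set.range Lbar)).topologicalClosure →⋆ₐ[ℂ]
        (lp (fun _ : PTuples P => H) 2 →L[ℂ] lp (fun _ : PTuples P => H) 2))
    (hinj : Function.Injective φ)
    (hφ : ∀ (p : P) (h : Lbar p ∈ (StarAlgebra.adjoin ℂ (Set.range Lbar)).topologicalClosure),
      φ ⟨Lbar p, h⟩ = T p) :
    ∀ w w' : Word P, IsNeutral P w → IsNeutral P w' →
      KIdeal P L w = KIdeal P L w' → (KIdeal P L w).Nonempty →
      dotted P V w = dotted P V w' := by
  intro w w' hw hw' hK hne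
  -- the two dotted Lbar operators agree
  have hres_iff : ∀ p : P, (res P w p).isSome ↔ (res P w' p).isSome := by
    intro p
    rw [← kideal_iff P L hL w hw p, ← kideal_iff P L hL w' hw' p, hK]
  have hLbar_eq : dotted P Lbar w = dotted P Lbar w' := by
    apply clm_ext_of_ketV
    intro x ξ
    rw [ketV_eq_smul, map_smul, map_smul]
    congr 1
    rw [dotted_Lbar_ket P Lbar hLbar, dotted_Lbar_ket P Lbar hLbar,
      resX_neutral P w hw x, resX_neutral P w' hw' x]
    by_cases h : ∀ i, (res P w (x.2 i)).isSome
    · rw [if_pos h, if_pos (fun i => (hres_iff (x.2 i)).mp (h i))]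
    · rw [if_neg h, if_neg (fun hc => h (fun i => (hres_iff (x.2 i)).mpr (hc i)))]
  -- transfer via φ
  have hmem : ∀ p : P, Lbar p ∈ (StarAlgebra.adjoin ℂ (Set.range Lbar)).topologicalClosure :=
    fun p => (StarSubalgebra.le_topologicalClosure _)
      (StarAlgebra.subset_adjoin ℂ (Set.range Lbar) (Set.mem_range_self p))
  have hcoe : ∀ u : Word P,
      ((dotted P (fun p => (⟨Lbar p, hmem p⟩ :
        (StarAlgebra.adjoin ℂ (Set.range Lbar)).topologicalClosure)) u :
        (StarAlgebra.adjoin ℂ (Set.range Lbar)).topologicalClosure) :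
        lp (fun _ : PTuples P => ℂ) 2 →L[ℂ] lp (fun _ : PTuples P => ℂ) 2)
      = dotted P Lbar u := by
    intro u
    have := map_dotted P
      (StarSubalgebra.subtype (StarAlgebra.adjoin ℂ (Set.range Lbar)).topologicalClosure)
      (fun p => (⟨Lbar p, hmem p⟩ :
        (StarAlgebra.adjoin ℂ (Set.range Lbar)).topologicalClosure)) u
    simpa using this
  have hTd : ∀ u : Word P, dotted P T u
      = φ (dotted P (fun p => (⟨Lbar p, hmem p⟩ :
        (StarAlgebra.adjoin ℂ (Set.range Lbar)).topologicalClosure)) u) := by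
    intro u
    rw [map_dotted P φ _ u]
    have : (fun p => φ (⟨Lbar p, hmem p⟩ :
        (StarAlgebra.adjoin ℂ (Set.range Lbar)).topologicalClosure)) = T :=
      funext fun p => hφ p (hmem p)
    rw [this]
  have hdLb : dotted P (fun p => (⟨Lbar p, hmem p⟩ :
        (StarAlgebra.adjoin ℂ (Set.range Lbar)).topologicalClosure)) w
      = dotted P (fun p => (⟨Lbar p, hmem p⟩ :
        (StarAlgebra.adjoin ℂ (Set.range Lbar)).topologicalClosure)) w' := by
    apply Subtype.ext
    rw [← hcoe w, ← hcoe w'] at hLbar_eq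
    exact hLbar_eq
  have hT_eq : dotted P T w = dotted P T w' := by rw [hTd, hTd, hdLb]
  -- evaluate at a point of K
  obtain ⟨p, hp⟩ := hne
  have hpw : (res P w p).isSome := (kideal_iff P L hL w hw p).mp hp
  have hpw' : (res P w' p).isSome := (hres_iff p).mp hpw
  set x₀ : PTuples P := ⟨0, fun _ => p⟩ with hx₀
  have hx : resX P w x₀ = some x₀ := by
    rw [resX_neutral P w hw x₀, if_pos (fun _ => hpw)]
  have hx' : resX P w' x₀ = some x₀ := by
    rw [resX_neutral P w' hw' x₀, if_pos (fun _ => hpw')]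
  refine ContinuousLinearMap.ext fun ξ => ?_
  have h1 := dotted_T_ketV P V T hT w x₀ ξ
  have h2 := dotted_T_ketV P V T hT w' x₀ ξ
  rw [hx] at h1
  rw [hx'] at h2
  rw [hT_eq, h2] at h1
  simp only [Option.elim] at h1
  have := congrArg (fun g : lp (fun _ : PTuples P => H) 2 => (g : ∀ _ : PTuples P, H) x₀) h1.symm
  simpa [ketV_coord] using this

end
end

section
/- Let P be a submonoid of a (discrete) group G and let 𝒯_λ(P)⁺ be the norm-closed unital subalgebra of B(ℓ²(P)) generated by {L_p : p ∈ P}. If 𝒯_λ(P)⁺ admits a character ω (a nonzero multiplicative linear functional) satisfying ω(L_p) = 1 for all p ∈ P, then P is left reversible, i.e., pP ∩ qP ≠ ∅ for all p, q ∈ P. -/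
noncomputable section
set_option synthInstance.maxHeartbeats 1000000
set_option maxHeartbeats 1000000
set_option linter.unusedVariables false

open scoped ENNReal

variable {G : Type*} [Group G]

open scoped InnerProductSpace ComplexConjugate

lemma ket_eq_single {ι : Type*} [DecidableEq ι] (i : ι) :
    ket i = lp.single 2 i (1 : ℂ) := by
  unfold ket
  congr!

lemma inner_ket_ket {ι : Type*} [DecidableEq ι] (i j : ι) :
    ⟪ket i, ket j⟫_ℂ = if i = j then 1 else 0 := by
  rw [ket_eq_single, ket_eq_single, lp.inner_single_left, lp.single_apply]
  simp [RCLike.inner_apply, eq_comm, Pi.single_apply]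

lemma orthonormal_ket {ι : Type*} : Orthonormal ℂ (ket : ι → l2 ι) := by
  classical
  rw [orthonormal_iff_ite]
  intro i j
  exact inner_ket_ket i j

lemma dense_span_ket {ι : Type*} :
    Dense ((Submodule.span ℂ (Set.range (ket : ι → l2 ι)) : Submodule ℂ (l2 ι)) : Set (l2 ι)) := by
  classical
  let b : HilbertBasis ι ℂ (l2 ι) := HilbertBasis.ofRepr (LinearIsometryEquiv.refl ℂ _)
  have hb : ∀ i, b i = ket i := by
    intro i
    rw [ket_eq_single]
    rfl
  have hd := b.dense_span
  have hr : Set.range ⇑b = Set.range (ket : ι → l2 ι) := by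
    ext x; constructor <;> rintro ⟨i, rfl⟩
    · exact ⟨i, (hb i).symm⟩
    · exact ⟨i, hb i⟩
  rw [hr] at hd
  exact Submodule.dense_iff_topologicalClosure_eq_top.mpr hd

/-- **(Theorem 5.3, (i) ⟹ (ii), reversibility part.)**  If the tensor algebra
`𝒯_λ(P)⁺` — the norm-closed unital subalgebra of `B(ℓ²(P))` generated by the left regular
representation — admits a character `ω` with `ω(L_p) = 1` for all `p ∈ P`, then `P` is
left reversible: `pP ∩ qP ≠ ∅` for all `p, q ∈ P`. -/
theorem character_implies_leftReversible (P : Submonoid G)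
    (L : P → (l2 P →L[ℂ] l2 P))
    (hL : ∀ p q : P, L p (ket q) = ket (p * q))
    (ω : (Algebra.adjoin ℂ (Set.range L)).topologicalClosure →ₐ[ℂ] ℂ)
    (hω : ∀ (p : P) (h : L p ∈ (Algebra.adjoin ℂ (Set.range L)).topologicalClosure),
      ω ⟨L p, h⟩ = 1) :
    ∀ p q : P, ∃ a b : P, p * a = q * b := by
  classical
  intro p q
  by_contra hcon
  push_neg at hcon
  have hinj : ∀ r : P, Function.Injective (fun i : P => r * i) := by
    intro r a b hab
    have h2 : (r : G) * a = (r : G) * b := by exact_mod_cast congrArg Subtype.val hab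
    exact Subtype.ext (mul_left_cancel h2)
  set T : l2 P →L[ℂ] l2 P := L p + L q with hT
  have key : ∀ x ∈ (Submodule.span ℂ (Set.range (ket : P → l2 P)) : Set (l2 P)),
      x ∈ {x : l2 P | ‖T x‖ ≤ Real.sqrt 2 * ‖x‖} := by
    intro x hx
    obtain ⟨c, rfl⟩ := Finsupp.mem_span_range_iff_exists_finsupp.mp hx
    rw [Set.mem_setOf_eq, Finsupp.sum]
    set s := c.support with hs
    set u := ∑ i ∈ s, c i • ket ((p * i : P)) with hu
    set v := ∑ i ∈ s, c i • ket ((q * i : P)) with hv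
    have hTx : T (∑ i ∈ s, c i • ket i) = u + v := by
      rw [hT, ContinuousLinearMap.add_apply, map_sum, map_sum, hu, hv]
      simp only [ContinuousLinearMap.map_smul, hL]
    have hipu : ⟪u, u⟫_ℂ = ∑ i ∈ s, conj (c i) * c i := by
      rw [hu]
      exact (orthonormal_ket.comp _ (hinj p)).inner_sum c c s
    have hipv : ⟪v, v⟫_ℂ = ∑ i ∈ s, conj (c i) * c i := by
      rw [hv]
      exact (orthonormal_ket.comp _ (hinj q)).inner_sum c c s
    have hipx : ⟪(∑ i ∈ s, c i • ket i : l2 P), ∑ i ∈ s, c i • ket i⟫_ℂ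
        = ∑ i ∈ s, conj (c i) * c i := orthonormal_ket.inner_sum c c s
    have hcross : ⟪u, v⟫_ℂ = 0 := by
      rw [hu, hv, sum_inner]
      refine Finset.sum_eq_zero fun i hi => ?_
      rw [inner_sum]
      refine Finset.sum_eq_zero fun j hj => ?_
      rw [inner_smul_left, inner_smul_right, inner_ket_ket,
        if_neg (fun h => hcon i j h), mul_zero, mul_zero]
    have hsq : ⟪u + v, u + v⟫_ℂ
        = 2 * ⟪(∑ i ∈ s, c i • ket i : l2 P), ∑ i ∈ s, c i • ket i⟫_ℂ := by
      have hvu : ⟪v, u⟫_ℂ = 0 := by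
        rw [← inner_conj_symm, hcross, map_zero]
      rw [inner_add_add_self, hipu, hipv, hcross, hvu, hipx]
      ring
    rw [@inner_self_eq_norm_sq_to_K ℂ, @inner_self_eq_norm_sq_to_K ℂ] at hsq
    have hsqR : ‖u + v‖ ^ 2 = 2 * ‖(∑ i ∈ s, c i • ket i : l2 P)‖ ^ 2 := by
      rw [two_mul] at hsq
      have h4 : ‖u + v‖ ^ 2 = ‖(∑ i ∈ s, c i • ket i : l2 P)‖ ^ 2
          + ‖(∑ i ∈ s, c i • ket i : l2 P)‖ ^ 2 := by exact_mod_cast hsq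
      linarith
    have hnn := norm_nonneg (∑ i ∈ s, c i • ket i : l2 P)
    have : ‖u + v‖ = Real.sqrt 2 * ‖(∑ i ∈ s, c i • ket i : l2 P)‖ := by
      rw [← Real.sqrt_sq (norm_nonneg (u + v)), hsqR, Real.sqrt_mul (by norm_num),
        Real.sqrt_sq hnn]
    rw [hTx, this]
  have hbound : ∀ x : l2 P, ‖T x‖ ≤ Real.sqrt 2 * ‖x‖ := by
    have hc : IsClosed {x : l2 P | ‖T x‖ ≤ Real.sqrt 2 * ‖x‖} :=
      isClosed_le T.continuous.norm (continuous_const.mul continuous_norm)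
    intro x
    exact closure_minimal key hc (dense_span_ket x)
  have hTnorm : ‖T‖ ≤ Real.sqrt 2 := T.opNorm_le_bound (Real.sqrt_nonneg 2) hbound
  have hmem : ∀ r : P, L r ∈ (Algebra.adjoin ℂ (Set.range L)).topologicalClosure := fun r =>
    (Algebra.adjoin ℂ (Set.range L)).le_topologicalClosure (Algebra.subset_adjoin ⟨r, rfl⟩)
  haveI : CompleteSpace ((Algebra.adjoin ℂ (Set.range L)).topologicalClosure) :=
    (Subalgebra.isClosed_topologicalClosure (Algebra.adjoin ℂ (Set.range L))).completeSpace_coe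
  set a : ((Algebra.adjoin ℂ (Set.range L)).topologicalClosure) :=
    ⟨T, add_mem (hmem p) (hmem q)⟩ with ha
  have hωa : ω a = 2 := by
    have h3 : a = ⟨L p, hmem p⟩ + ⟨L q, hmem q⟩ := rfl
    rw [h3, map_add, hω p (hmem p), hω q (hmem q)]
    norm_num
  have h1 : ‖(1 : ((Algebra.adjoin ℂ (Set.range L)).topologicalClosure))‖ ≤ 1 := by
    show ‖((1 : ((Algebra.adjoin ℂ (Set.range L)).topologicalClosure)) : l2 P →L[ℂ] l2 P)‖ ≤ 1
    rw [OneMemClass.coe_one]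
    exact ContinuousLinearMap.norm_id_le
  have hle := AlgHom.norm_apply_le_self_mul_norm_one ω a
  rw [hωa] at hle
  have hna : ‖a‖ = ‖T‖ := rfl
  have h2 : ‖(2 : ℂ)‖ = 2 := by norm_num
  rw [h2, hna] at hle
  have hfin : (2 : ℝ) ≤ Real.sqrt 2 := by
    calc (2 : ℝ) ≤ ‖T‖ * ‖(1 : ((Algebra.adjoin ℂ (Set.range L)).topologicalClosure))‖ := hle
    _ ≤ Real.sqrt 2 * 1 := by
        apply mul_le_mul hTnorm h1 (norm_nonneg _) (Real.sqrt_nonneg 2)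
    _ = Real.sqrt 2 := mul_one _
  nlinarith [Real.sq_sqrt (by norm_num : (0:ℝ) ≤ 2), Real.sqrt_nonneg 2]


end
end
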